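/- Let J, K be positive integers, let Q be a J×K real matrix with entries q_{jk}, and let G be a J×K random matrix whose entries g_{jk} are i.i.d. complex random variables with mean zero and E|g_{jk}|² = 1 (e.g., standard complex Gaussians CN(0,1)). For a real J×J matrix T̃, define Δ = Q∘G − T̃G (where ∘ denotes the Hadamard, i.e., entrywise, product) and F(T̃) = E(‖Δ‖_F²), the expected squared Frobenius norm. Then F(T̃) attains its minimum over all real J×J matrices T̃ if and only if T̃ is the diagonal matrix whose j-th diagonal entry equals (1/K)·Σ_{k=1}^{K} q_{jk}, and the minimum value is F_min = Σ_{j=1}^{J} [ Σ_{k=1}^{K} q_{jk}² − (1/K)(Σ_{k=1}^{K} q_{jk})² ]. -/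

import Mathlib

open MeasureTheory ProbabilityTheory

lemma integrable_mul_of_memL2 {Ω : Type*} [MeasureSpace Ω] [IsProbabilityMeasure (volume : Measure Ω)]
    {f g : Ω → ℝ} (hf : MemLp f 2 (volume : Measure Ω)) (hg : MemLp g 2 (volume : Measure Ω)) :
    Integrable (fun ω => f ω * g ω) := by
  apply Integrable.mono' (((hf.integrable_sq.add hg.integrable_sq)).const_mul (1/2 : ℝ))
    (hf.1.mul hg.1)
  filter_upwards with ω
  simp only [Pi.add_apply, Pi.mul_apply, Real.norm_eq_abs, abs_mul]
  nlinarith [sq_nonneg (|f ω| - |g ω|), sq_abs (f ω), sq_abs (g ω)]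

lemma memL2_re {Ω : Type*} [MeasureSpace Ω] {f : Ω → ℂ} (hf : MemLp f 2 (volume : Measure Ω)) :
    MemLp (fun ω => (f ω).re) 2 (volume : Measure Ω) := by
  have := hf.re (𝕜 := ℂ); simpa using this

lemma memL2_im {Ω : Type*} [MeasureSpace Ω] {f : Ω → ℂ} (hf : MemLp f 2 (volume : Measure Ω)) :
    MemLp (fun ω => (f ω).im) 2 (volume : Measure Ω) := by
  have := hf.im (𝕜 := ℂ); simpa using this

/-- With `Δ(T̃) = Q∘G − T̃G` and `F(T̃) = E‖Δ(T̃)‖_F²`, where the entries of `G`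
are i.i.d. complex random variables with mean zero and `E|g_{jk}|² = 1`, the functional `F`
attains its minimum over all real `J×J` matrices `T̃` if and only if `T̃` is the diagonal
matrix with `j`-th diagonal entry `(1/K)·∑_k q_{jk}`, and the minimum value is
`∑_j [ ∑_k q_{jk}² − (1/K)(∑_k q_{jk})² ]`. -/
theorem hadamard_to_matrix_product_optimal
    {Ω : Type*} [MeasureSpace Ω] [IsProbabilityMeasure (volume : Measure Ω)]
    (J K : ℕ) (hJ : 0 < J) (hK : 0 < K)
    (Q : Matrix (Fin J) (Fin K) ℝ)
    (G : Ω → Matrix (Fin J) (Fin K) ℂ)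
    (hmeas : ∀ (j : Fin J) (k : Fin K), Measurable (fun ω => G ω j k))
    (hindep : iIndepFun
      (fun p : Fin J × Fin K => fun ω => G ω p.1 p.2) volume)
    (hident : ∀ p q : Fin J × Fin K,
      IdentDistrib (fun ω => G ω p.1 p.2) (fun ω => G ω q.1 q.2) volume volume)
    (hmean : ∀ (j : Fin J) (k : Fin K), ∫ ω, G ω j k = 0)
    (hvar : ∀ (j : Fin J) (k : Fin K), ∫ ω, ‖G ω j k‖ ^ 2 = 1)
    (F : Matrix (Fin J) (Fin J) ℝ → ℝ)
    (hF : ∀ T : Matrix (Fin J) (Fin J) ℝ,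
      F T = ∫ ω, ∑ j, ∑ k, ‖(Q j k : ℂ) * G ω j k - ∑ n, (T j n : ℂ) * G ω n k‖ ^ 2) :
    (∀ T : Matrix (Fin J) (Fin J) ℝ,
        (∀ S : Matrix (Fin J) (Fin J) ℝ, F T ≤ F S) ↔
          T = Matrix.diagonal (fun j => (1 / (K : ℝ)) * ∑ k, Q j k)) ∧
      F (Matrix.diagonal (fun j => (1 / (K : ℝ)) * ∑ k, Q j k))
        = ∑ j, ((∑ k, (Q j k) ^ 2) - (1 / (K : ℝ)) * (∑ k, Q j k) ^ 2) := by
  have hKR : (0:ℝ) < K := by exact_mod_cast hK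
  set D : Matrix (Fin J) (Fin J) ℝ :=
    Matrix.diagonal (fun j => (1 / (K : ℝ)) * ∑ k, Q j k) with hDdef
  set C : ℝ := ∑ j, ((∑ k, (Q j k) ^ 2) - (1 / (K : ℝ)) * (∑ k, Q j k) ^ 2) with hCdef
  -- L² membership of entries
  have hmem : ∀ (j : Fin J) (k : Fin K), MemLp (fun ω => G ω j k) 2 (volume : Measure Ω) := by
    intro j k
    rw [memLp_two_iff_integrable_sq_norm (hmeas j k).aestronglyMeasurable]
    by_contra h
    have h1 := hvar j k
    rw [integral_undef h] at h1
    exact one_ne_zero h1.symm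
  -- real and imaginary parts
  set X : Fin J → Fin K → Ω → ℝ := fun n k ω => (G ω n k).re with hXdef
  set Y : Fin J → Fin K → Ω → ℝ := fun n k ω => (G ω n k).im with hYdef
  have hmemX : ∀ n k, MemLp (X n k) 2 (volume : Measure Ω) := fun n k => memL2_re (hmem n k)
  have hmemY : ∀ n k, MemLp (Y n k) 2 (volume : Measure Ω) := fun n k => memL2_im (hmem n k)
  have hintG : ∀ n k, Integrable (fun ω => G ω n k) (volume : Measure Ω) := fun n k =>
    (hmem n k).integrable one_le_two
  -- mean zero of real/imag parts
  have hmeanX : ∀ n k, ∫ ω, X n k ω = 0 := by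
    intro n k
    have := integral_re (μ := (volume : Measure Ω)) (f := fun ω => G ω n k) (hintG n k)
    rw [hmean n k] at this
    simpa [hXdef] using this
  have hmeanY : ∀ n k, ∫ ω, Y n k ω = 0 := by
    intro n k
    have := integral_im (μ := (volume : Measure Ω)) (f := fun ω => G ω n k) (hintG n k)
    rw [hmean n k] at this
    simpa [hYdef] using this
  -- second moments
  have hsq : ∀ n k, (∫ ω, X n k ω * X n k ω) + (∫ ω, Y n k ω * Y n k ω) = 1 := by
    intro n k
    rw [← integral_add (integrable_mul_of_memL2 (hmemX n k) (hmemX n k))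
      (integrable_mul_of_memL2 (hmemY n k) (hmemY n k))]
    rw [← hvar n k]
    congr 1; funext ω
    simp [hXdef, hYdef, Complex.sq_norm, Complex.normSq_apply]
  -- cross moments vanish
  have hcross : ∀ (m n : Fin J) (k : Fin K), m ≠ n →
      (∫ ω, X m k ω * X n k ω) = 0 ∧ (∫ ω, Y m k ω * Y n k ω) = 0 := by
    intro m n k hmn
    have hind : IndepFun (fun ω => G ω m k) (fun ω => G ω n k) (volume : Measure Ω) := by
      have := hindep.indepFun (i := (m, k)) (j := (n, k)) (by simp [hmn])
      exact this
    constructor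
    · have h1 : IndepFun (X m k) (X n k) (volume : Measure Ω) :=
        hind.comp Complex.measurable_re Complex.measurable_re
      rw [h1.integral_fun_mul_eq_mul_integral (hmemX m k).1 (hmemX n k).1, hmeanX m k, hmeanX n k, mul_zero]
    · have h1 : IndepFun (Y m k) (Y n k) (volume : Measure Ω) :=
        hind.comp Complex.measurable_im Complex.measurable_im
      rw [h1.integral_fun_mul_eq_mul_integral (hmemY m k).1 (hmemY n k).1, hmeanY m k, hmeanY n k, mul_zero]
  -- pointwise expansion of the squared norm
  have hexpand : ∀ (k : Fin K) (c : Fin J → ℝ) (ω : Ω),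
      ‖∑ n, (c n : ℂ) * G ω n k‖ ^ 2
        = ∑ m, ∑ n, (c m * c n) * (X m k ω * X n k ω + Y m k ω * Y n k ω) := by
    intro k c ω
    have hre : (∑ n, (c n : ℂ) * G ω n k).re = ∑ n, c n * X n k ω := by
      rw [Complex.re_sum]; exact Finset.sum_congr rfl fun n _ => by simp [hXdef]
    have him : (∑ n, (c n : ℂ) * G ω n k).im = ∑ n, c n * Y n k ω := by
      rw [Complex.im_sum]; exact Finset.sum_congr rfl fun n _ => by simp [hYdef]
    rw [Complex.sq_norm, Complex.normSq_apply, hre, him,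
      Finset.sum_mul_sum, Finset.sum_mul_sum, ← Finset.sum_add_distrib]
    refine Finset.sum_congr rfl fun m _ => ?_
    rw [← Finset.sum_add_distrib]
    exact Finset.sum_congr rfl fun n _ => by ring
  -- integrability of each expansion term
  have hintterm : ∀ (k : Fin K) (c : Fin J → ℝ) (m n : Fin J),
      Integrable (fun ω => (c m * c n) * (X m k ω * X n k ω + Y m k ω * Y n k ω))
        (volume : Measure Ω) := by
    intro k c m n
    exact (((integrable_mul_of_memL2 (hmemX m k) (hmemX n k)).add
      (integrable_mul_of_memL2 (hmemY m k) (hmemY n k))).const_mul _)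
  have hintnorm : ∀ (k : Fin K) (c : Fin J → ℝ),
      Integrable (fun ω => ‖∑ n, (c n : ℂ) * G ω n k‖ ^ 2) (volume : Measure Ω) := by
    intro k c
    have : Integrable (fun ω => ∑ m, ∑ n,
        (c m * c n) * (X m k ω * X n k ω + Y m k ω * Y n k ω)) (volume : Measure Ω) :=
      integrable_finset_sum _ fun m _ => integrable_finset_sum _ fun n _ => hintterm k c m n
    exact this.congr (by filter_upwards with ω; rw [hexpand k c ω])
  -- key computation
  have key : ∀ (k : Fin K) (c : Fin J → ℝ),
      ∫ ω, ‖∑ n, (c n : ℂ) * G ω n k‖ ^ 2 = ∑ n, (c n) ^ 2 := by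
    intro k c
    calc ∫ ω, ‖∑ n, (c n : ℂ) * G ω n k‖ ^ 2
        = ∫ ω, ∑ m, ∑ n, (c m * c n) * (X m k ω * X n k ω + Y m k ω * Y n k ω) := by
          exact integral_congr_ae (by filter_upwards with ω; rw [hexpand k c ω])
      _ = ∑ m, ∑ n, ∫ ω, (c m * c n) * (X m k ω * X n k ω + Y m k ω * Y n k ω) := by
          rw [integral_finset_sum _ fun m _ =>
            integrable_finset_sum _ fun n _ => hintterm k c m n]
          exact Finset.sum_congr rfl fun m _ =>
            integral_finset_sum _ fun n _ => hintterm k c m n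
      _ = ∑ m, ∑ n, (c m * c n) *
            ((∫ ω, X m k ω * X n k ω) + ∫ ω, Y m k ω * Y n k ω) := by
          refine Finset.sum_congr rfl fun m _ => Finset.sum_congr rfl fun n _ => ?_
          rw [integral_const_mul, integral_add
            (integrable_mul_of_memL2 (hmemX m k) (hmemX n k))
            (integrable_mul_of_memL2 (hmemY m k) (hmemY n k))]
      _ = ∑ n, (c n) ^ 2 := by
          rw [Finset.sum_comm]
          refine Finset.sum_congr rfl fun n _ => ?_
          rw [Finset.sum_eq_single n]
          · rw [hsq n k]; ring
          · intro m _ hmn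
            rcases hcross m n k hmn with ⟨h1, h2⟩
            rw [h1, h2]; ring
          · intro h; exact absurd (Finset.mem_univ n) h
  -- coefficient function
  set c : Matrix (Fin J) (Fin J) ℝ → Fin J → Fin K → Fin J → ℝ :=
    fun T j k n => (if n = j then Q j k else 0) - T j n with hcdef
  have hrw : ∀ (T : Matrix (Fin J) (Fin J) ℝ) (j : Fin J) (k : Fin K) (ω : Ω),
      (Q j k : ℂ) * G ω j k - ∑ n, (T j n : ℂ) * G ω n k
        = ∑ n, ((c T j k n : ℝ) : ℂ) * G ω n k := by
    intro T j k ω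
    have h : ∀ n : Fin J, ((c T j k n : ℝ) : ℂ) * G ω n k
        = (if n = j then (Q j k : ℂ) * G ω n k else 0) - (T j n : ℂ) * G ω n k := by
      intro n
      by_cases hn : n = j <;> simp only [hcdef, hn, if_pos, if_neg, ite_true, ite_false] <;>
        push_cast <;> ring
    rw [Finset.sum_congr rfl fun n _ => h n, Finset.sum_sub_distrib]
    simp
  -- formula for F
  have hFform : ∀ T : Matrix (Fin J) (Fin J) ℝ,
      F T = ∑ j, ∑ k, ∑ n, (c T j k n) ^ 2 := by
    intro T
    rw [hF T]
    have : ∀ ω, (∑ j, ∑ k, ‖(Q j k : ℂ) * G ω j k - ∑ n, (T j n : ℂ) * G ω n k‖ ^ 2)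
        = ∑ j, ∑ k, ‖∑ n, ((c T j k n : ℝ) : ℂ) * G ω n k‖ ^ 2 := by
      intro ω
      exact Finset.sum_congr rfl fun j _ => Finset.sum_congr rfl fun k _ => by rw [hrw T j k ω]
    rw [integral_congr_ae (Filter.Eventually.of_forall this)]
    rw [integral_finset_sum _ fun j _ => integrable_finset_sum _ fun k _ => hintnorm k _]
    refine Finset.sum_congr rfl fun j _ => ?_
    rw [integral_finset_sum _ fun k _ => hintnorm k _]
    exact Finset.sum_congr rfl fun k _ => key k _
  -- algebraic identity
  have halg : ∀ T : Matrix (Fin J) (Fin J) ℝ,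
      F T = C + (K : ℝ) * ∑ j, ∑ n, (T j n - D j n) ^ 2 := by
    intro T
    rw [hFform T]
    have hKne : (K : ℝ) ≠ 0 := hKR.ne'
    have hjn : ∀ (j n : Fin J), (∑ k, (c T j k n) ^ 2)
        = (if n = j then ((∑ k, (Q j k) ^ 2) - (1 / (K : ℝ)) * (∑ k, Q j k) ^ 2) else 0)
          + (K : ℝ) * (T j n - D j n) ^ 2 := by
      intro j n
      by_cases hn : n = j
      · subst hn
        simp only [hcdef, ite_true, if_pos, hDdef, Matrix.diagonal_apply_eq]
        have h1 : (∑ k, (Q n k - T n n) ^ 2)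
            = ∑ k, ((Q n k) ^ 2 - 2 * T n n * Q n k + T n n ^ 2) :=
          Finset.sum_congr rfl fun k _ => by ring
        rw [h1, Finset.sum_add_distrib, Finset.sum_sub_distrib, ← Finset.mul_sum,
          Finset.sum_const, Finset.card_univ, Fintype.card_fin, nsmul_eq_mul]
        field_simp
        ring
      · simp only [hcdef, if_neg hn, ite_false, hDdef, Matrix.diagonal_apply_ne _
          (fun h => hn h.symm)]
        rw [Finset.sum_congr rfl (fun (k : Fin K) _ => show ((0:ℝ) - T j n) ^ 2
          = (T j n) ^ 2 by ring), Finset.sum_const, Finset.card_univ, Fintype.card_fin,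
          nsmul_eq_mul]
        ring
    calc (∑ j, ∑ k, ∑ n, (c T j k n) ^ 2)
        = ∑ j, ∑ n, ∑ k, (c T j k n) ^ 2 :=
          Finset.sum_congr rfl fun j _ => Finset.sum_comm
      _ = ∑ j, ∑ n, ((if n = j then ((∑ k, (Q j k) ^ 2)
            - (1 / (K : ℝ)) * (∑ k, Q j k) ^ 2) else 0)
          + (K : ℝ) * (T j n - D j n) ^ 2) :=
          Finset.sum_congr rfl fun j _ => Finset.sum_congr rfl fun n _ => hjn j n
      _ = ∑ j, (((∑ k, (Q j k) ^ 2) - (1 / (K : ℝ)) * (∑ k, Q j k) ^ 2)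
          + (K : ℝ) * ∑ n, (T j n - D j n) ^ 2) := by
          refine Finset.sum_congr rfl fun j _ => ?_
          rw [Finset.sum_add_distrib, ← Finset.mul_sum,
            Finset.sum_ite_eq' Finset.univ j
              (fun _ => (∑ k, (Q j k) ^ 2) - (1 / (K : ℝ)) * (∑ k, Q j k) ^ 2)]
          simp
      _ = C + (K : ℝ) * ∑ j, ∑ n, (T j n - D j n) ^ 2 := by
          rw [Finset.sum_add_distrib, ← Finset.mul_sum, hCdef]
  have hFD : F D = C := by
    rw [halg D]; simp
  refine ⟨fun T => ⟨fun h => ?_, fun h => ?_⟩, hFD⟩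
  · -- minimality implies T = D
    have h1 : F T ≤ C := hFD ▸ h D
    rw [halg T] at h1
    have h2 : (0:ℝ) ≤ ∑ j, ∑ n, (T j n - D j n) ^ 2 :=
      Finset.sum_nonneg fun j _ => Finset.sum_nonneg fun n _ => sq_nonneg _
    have h3 : ∑ j, ∑ n, (T j n - D j n) ^ 2 = 0 := by nlinarith
    ext j n
    have h4 : ∀ j ∈ Finset.univ, (∑ n, (T j n - D j n) ^ 2) = 0 := by
      rw [← Finset.sum_eq_zero_iff_of_nonneg fun j _ =>
        Finset.sum_nonneg fun n _ => sq_nonneg _]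
      exact h3
    have h5 := (Finset.sum_eq_zero_iff_of_nonneg fun n _ => sq_nonneg _).mp
      (h4 j (Finset.mem_univ j)) n (Finset.mem_univ n)
    have := pow_eq_zero_iff (n := 2) (by norm_num) |>.mp h5
    linarith [sub_eq_zero.mp this]
  · subst h
    intro S
    rw [halg S, hFD]
    have : (0:ℝ) ≤ (K : ℝ) * ∑ j, ∑ n, (S j n - D j n) ^ 2 :=
      mul_nonneg hKR.le (Finset.sum_nonneg fun j _ => Finset.sum_nonneg fun n _ => sq_nonneg _)
    linarith
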